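/- Let Σ* be a real symmetric positive definite p×p matrix, let (Sₙ) be a sequence of real symmetric p×p matrices with Sₙ → Σ* (entrywise, equivalently in Frobenius norm), and let (λₙ) be positive reals with λₙ → 0. For each n, let Θ̂ₙ be the unique minimizer of Θ ↦ −log det Θ + tr(SₙΘ) + λₙ‖Θ‖_F² over symmetric positive definite matrices. Then Θ̂ₙ → (Σ*)⁻¹ in Frobenius norm. -/

import Mathlib

open scoped Matrix

open Filter Topology Finset Matrix

section AuxLemmas

lemma aux_log_le (t : ℝ) (ht : 0 < t) : Real.log t ≤ 2 * (Real.sqrt t - 1) := by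
  have h1 : Real.log (Real.sqrt t) ≤ Real.sqrt t - 1 :=
    Real.log_le_sub_one_of_pos (Real.sqrt_pos.mpr ht)
  rw [Real.log_sqrt ht.le] at h1
  linarith

lemma aux_key_ineq (t : ℝ) (ht : 0 < t) :
    (t - 1) ^ 2 ≤ 2 * (1 + t) * (t - Real.log t - 1) := by
  have h1 := aux_log_le t ht
  have hu2 : Real.sqrt t ^ 2 = t := Real.sq_sqrt ht.le
  set u := Real.sqrt t
  nlinarith [sq_nonneg (u - 1), sq_nonneg ((u - 1) ^ 2), sq_nonneg (u + 1), Real.sqrt_nonneg t,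
    sq_nonneg (u ^ 2 - 1)]

lemma aux_half_le (t : ℝ) (ht : 0 < t) : t / 2 - 1 ≤ t - Real.log t - 1 := by
  have h1 := aux_log_le t ht
  have hu2 : Real.sqrt t ^ 2 = t := Real.sq_sqrt ht.le
  nlinarith [sq_nonneg (Real.sqrt t - 2)]

lemma aux_nonneg (t : ℝ) (ht : 0 < t) : 0 ≤ t - Real.log t - 1 := by
  have := Real.log_le_sub_one_of_pos ht
  linarith

variable {p : ℕ}

lemma aux_trace_mul (A B : Matrix (Fin p) (Fin p) ℝ) :
    (A * B).trace = ∑ i, ∑ j, A i j * B j i := by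
  simp [Matrix.trace, Matrix.mul_apply, Matrix.diag]

lemma aux_trace_cs (A B : Matrix (Fin p) (Fin p) ℝ) :
    |(A * B).trace| ≤ Real.sqrt (∑ i, ∑ j, A i j ^ 2) * Real.sqrt (∑ i, ∑ j, B i j ^ 2) := by
  have hcs := Finset.sum_mul_sq_le_sq_mul_sq (Finset.univ : Finset (Fin p × Fin p))
    (fun q => A q.1 q.2) (fun q => B q.2 q.1)
  have h1 : (∑ q : Fin p × Fin p, A q.1 q.2 * B q.2 q.1) = (A * B).trace := by
    rw [aux_trace_mul]
    rw [← Finset.univ_product_univ, Finset.sum_product]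
  have h2 : (∑ q : Fin p × Fin p, A q.1 q.2 ^ 2) = ∑ i, ∑ j, A i j ^ 2 := by
    rw [← Finset.univ_product_univ, Finset.sum_product]
  have h3 : (∑ q : Fin p × Fin p, B q.2 q.1 ^ 2) = ∑ i, ∑ j, B i j ^ 2 := by
    rw [← Finset.univ_product_univ, Finset.sum_product]
    exact Finset.sum_comm
  rw [h1, h2, h3] at hcs
  have h4 : |(A * B).trace| = Real.sqrt ((A * B).trace ^ 2) := (Real.sqrt_sq_eq_abs _).symm
  rw [h4, ← Real.sqrt_mul (by positivity)]
  exact Real.sqrt_le_sqrt hcs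

lemma aux_trace_conj (U D : Matrix (Fin p) (Fin p) ℝ) (hU : star U * U = 1) :
    (U * D * star U).trace = D.trace := by
  rw [Matrix.trace_mul_cycle, hU, one_mul]

lemma aux_trace_eq_sum_eig {A : Matrix (Fin p) (Fin p) ℝ} (hA : A.IsHermitian) :
    A.trace = ∑ i, hA.eigenvalues i := by
  conv_lhs => rw [hA.spectral_theorem]
  rw [Unitary.conjStarAlgAut_apply, aux_trace_conj _ _ (Unitary.coe_star_mul_self hA.eigenvectorUnitary)]
  simp [Matrix.trace_diagonal, RCLike.ofReal_real_eq_id]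

lemma aux_trace_sq_eq_sum_eig {A : Matrix (Fin p) (Fin p) ℝ} (hA : A.IsHermitian) :
    (A * A).trace = ∑ i, hA.eigenvalues i ^ 2 := by
  set U : Matrix (Fin p) (Fin p) ℝ := (hA.eigenvectorUnitary : Matrix (Fin p) (Fin p) ℝ)
    with hUdef
  have hU : star U * U = 1 := Unitary.coe_star_mul_self hA.eigenvectorUnitary
  set D : Matrix (Fin p) (Fin p) ℝ := Matrix.diagonal (RCLike.ofReal ∘ hA.eigenvalues) with hDdef
  have hspec : A = U * D * star U := hA.spectral_theorem
  have hAA : A * A = U * (D * D) * star U := by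
    rw [hspec]
    simp only [mul_assoc]
    rw [← mul_assoc (star U) U, hU, one_mul]
  rw [hAA, aux_trace_conj _ _ hU, hDdef, Matrix.diagonal_mul_diagonal, Matrix.trace_diagonal]
  simp [RCLike.ofReal_real_eq_id, sq]

lemma aux_sumsq_eq_trace_sq {A : Matrix (Fin p) (Fin p) ℝ} (hA : A.IsHermitian) :
    (∑ i, ∑ j, A i j ^ 2) = (A * A).trace := by
  rw [aux_trace_mul]
  congr 1; ext i; congr 1; ext j
  have h : A j i = A i j := by
    have := congrFun (congrFun hA.eq i) j
    simpa [Matrix.conjTranspose_apply] using this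
  rw [h]; ring

lemma aux_posDef_conj {A B : Matrix (Fin p) (Fin p) ℝ} (hA : A.PosDef) (hB : IsUnit B.det) :
    (Bᴴ * A * B).PosDef := by
  exact hA.conjTranspose_mul_mul_same
    (Matrix.mulVec_injective_of_isUnit ((Matrix.isUnit_iff_isUnit_det B).mpr hB))

lemma aux_spec {A : Matrix (Fin p) (Fin p) ℝ} (hA : A.PosDef) :
    0 ≤ A.trace - Real.log A.det - p ∧
    A.trace ≤ 2 * ((A.trace - Real.log A.det - p) + p) ∧
    (∑ i, ∑ j, (A - 1) i j ^ 2) ≤ 2 * (1 + A.trace) * (A.trace - Real.log A.det - p) ∧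
    Real.sqrt (∑ i, ∑ j, A i j ^ 2) ≤ A.trace := by
  classical
  set μ : Fin p → ℝ := hA.1.eigenvalues with hμdef
  have hμpos : ∀ i, 0 < μ i := fun i => hA.eigenvalues_pos i
  have htr : A.trace = ∑ i, μ i := aux_trace_eq_sum_eig hA.1
  have hdet : A.det = ∏ i, μ i := by
    simpa [RCLike.ofReal_real_eq_id] using hA.1.det_eq_prod_eigenvalues
  have hlog : Real.log A.det = ∑ i, Real.log (μ i) := by
    rw [hdet, Real.log_prod fun i _ => (hμpos i).ne']
  have hcard : (p : ℝ) = ∑ _i : Fin p, (1 : ℝ) := by simp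
  have hx : A.trace - Real.log A.det - p = ∑ i, (μ i - Real.log (μ i) - 1) := by
    rw [htr, hlog, hcard, ← Finset.sum_sub_distrib, ← Finset.sum_sub_distrib]
  have htr_nonneg : 0 ≤ A.trace := by
    rw [htr]; exact Finset.sum_nonneg fun i _ => (hμpos i).le
  have hx_nonneg : 0 ≤ A.trace - Real.log A.det - p := by
    rw [hx]; exact Finset.sum_nonneg fun i _ => aux_nonneg _ (hμpos i)
  refine ⟨hx_nonneg, ?_, ?_, ?_⟩
  · rw [hx, htr]
    have hterm : ∀ i ∈ Finset.univ, μ i ≤ 2 * (μ i - Real.log (μ i) - 1) + 2 := fun i _ => by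
      have := aux_half_le (μ i) (hμpos i); linarith
    calc ∑ i, μ i ≤ ∑ i, (2 * (μ i - Real.log (μ i) - 1) + 2) := Finset.sum_le_sum hterm
      _ = 2 * ((∑ i, (μ i - Real.log (μ i) - 1)) + p) := by
          rw [Finset.sum_add_distrib, ← Finset.mul_sum]
          simp [Finset.card_univ]
          ring
  · have hH1 : (A - 1).IsHermitian := hA.1.sub Matrix.isHermitian_one
    have e1 : (∑ i, ∑ j, (A - 1) i j ^ 2) = ((A - 1) * (A - 1)).trace :=
      aux_sumsq_eq_trace_sq hH1
    have e2 : (A - 1) * (A - 1) = A * A - A - A + 1 := by noncomm_ring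
    have e3 : ((A - 1) * (A - 1)).trace = (A * A).trace - 2 * A.trace + p := by
      rw [e2]
      simp [Matrix.trace_add, Matrix.trace_sub, Matrix.trace_one]
      ring
    have e4 : (A * A).trace = ∑ i, μ i ^ 2 := aux_trace_sq_eq_sum_eig hA.1
    have e5 : (∑ i, ∑ j, (A - 1) i j ^ 2) = ∑ i, (μ i - 1) ^ 2 := by
      rw [e1, e3, e4, htr, hcard]
      rw [Finset.mul_sum, ← Finset.sum_sub_distrib, ← Finset.sum_add_distrib]
      exact Finset.sum_congr rfl fun i _ => by ring
    have hμle : ∀ i, μ i ≤ A.trace := fun i => by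
      rw [htr]; exact Finset.single_le_sum (fun j _ => (hμpos j).le) (Finset.mem_univ i)
    have hterm : ∀ i ∈ Finset.univ,
        (μ i - 1) ^ 2 ≤ 2 * (1 + A.trace) * (μ i - Real.log (μ i) - 1) := fun i _ => by
      have h1 := aux_key_ineq (μ i) (hμpos i)
      have h2 := aux_nonneg (μ i) (hμpos i)
      have h3 := hμle i
      nlinarith
    calc (∑ i, ∑ j, (A - 1) i j ^ 2) = ∑ i, (μ i - 1) ^ 2 := e5
      _ ≤ ∑ i, 2 * (1 + A.trace) * (μ i - Real.log (μ i) - 1) := Finset.sum_le_sum hterm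
      _ = 2 * (1 + A.trace) * (A.trace - Real.log A.det - p) := by
          rw [hx, Finset.mul_sum]
  · have e1 : (∑ i, ∑ j, A i j ^ 2) = (A * A).trace := aux_sumsq_eq_trace_sq hA.1
    have e4 : (A * A).trace = ∑ i, μ i ^ 2 := aux_trace_sq_eq_sum_eig hA.1
    have h5 : ∑ i, μ i ^ 2 ≤ (∑ i, μ i) ^ 2 :=
      Finset.sum_sq_le_sq_sum_of_nonneg fun i _ => (hμpos i).le
    have h6 : (∑ i, ∑ j, A i j ^ 2) ≤ A.trace ^ 2 := by
      rw [e1, e4, htr]; exact h5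
    calc Real.sqrt (∑ i, ∑ j, A i j ^ 2) ≤ Real.sqrt (A.trace ^ 2) := Real.sqrt_le_sqrt h6
      _ = A.trace := by rw [Real.sqrt_sq htr_nonneg]

end AuxLemmas

/-- The Frobenius norm of a real matrix: the square root of the sum of the
squares of the entries. -/
noncomputable def frobNorm {p q : ℕ} (A : Matrix (Fin p) (Fin q) ℝ) : ℝ :=
  Real.sqrt (∑ i, ∑ j, (A i j) ^ 2)

/-- The ridge-penalized negative log-likelihood with sample covariance `S` and
tuning parameter `lam`. -/
noncomputable def ridgeObj {p : ℕ} (S : Matrix (Fin p) (Fin p) ℝ) (lam : ℝ)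
    (Θ : Matrix (Fin p) (Fin p) ℝ) : ℝ :=
  -Real.log Θ.det + (S * Θ).trace + lam * ∑ i, ∑ j, (Θ i j) ^ 2

set_option maxHeartbeats 4000000 in
/-- If `Sₙ → Σ*` entrywise with `Σ*` symmetric positive definite,
`λₙ > 0` with `λₙ → 0`, and `Θ̂ₙ` is the minimizer of the ridge-penalized negative
log-likelihood with inputs `Sₙ, λₙ`, then `Θ̂ₙ → (Σ*)⁻¹` in Frobenius norm. -/
theorem stmt5 {p : ℕ} (Sigstar : Matrix (Fin p) (Fin p) ℝ) (hSigstar : Sigstar.PosDef)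
    (S : ℕ → Matrix (Fin p) (Fin p) ℝ) (hSsymm : ∀ n, (S n)ᵀ = S n)
    (hSconv : ∀ i j, Filter.Tendsto (fun n => S n i j) Filter.atTop (nhds (Sigstar i j)))
    (lam : ℕ → ℝ) (hlam : ∀ n, 0 < lam n)
    (hlamconv : Filter.Tendsto lam Filter.atTop (nhds 0))
    (Θhat : ℕ → Matrix (Fin p) (Fin p) ℝ)
    (hΘhat : ∀ n, (Θhat n).PosDef ∧ ∀ Θ : Matrix (Fin p) (Fin p) ℝ, Θ.PosDef →
      ridgeObj (S n) (lam n) (Θhat n) ≤ ridgeObj (S n) (lam n) Θ) :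
    Filter.Tendsto (fun n => frobNorm (Θhat n - Sigstar⁻¹)) Filter.atTop (nhds 0) := by
  classical
  -- square root of Sigstar
  open scoped MatrixOrder in
  obtain ⟨R, hRdef⟩ : ∃ R : Matrix (Fin p) (Fin p) ℝ, R = CFC.sqrt Sigstar := ⟨_, rfl⟩
  open scoped MatrixOrder in
  have hRH : R.IsHermitian := by rw [hRdef]; exact (CFC.sqrt_nonneg Sigstar).posSemidef.1
  open scoped MatrixOrder in
  have hRR : R * R = Sigstar := by rw [hRdef]; exact CFC.sqrt_mul_sqrt_self Sigstar hSigstar.posSemidef.nonneg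
  have hdetS : 0 < Sigstar.det := hSigstar.det_pos
  have hRdet : IsUnit R.det := by
    refine isUnit_iff_ne_zero.mpr fun h => ?_
    have hd : R.det * R.det = Sigstar.det := by rw [← Matrix.det_mul, hRR]
    rw [h, zero_mul] at hd
    exact hdetS.ne' hd.symm
  have hRinvR : R⁻¹ * R = 1 := Matrix.nonsing_inv_mul R hRdet
  have hRRinv : R * R⁻¹ = 1 := Matrix.mul_nonsing_inv R hRdet
  have hSinv : Sigstar⁻¹ = R⁻¹ * R⁻¹ := by rw [← hRR, Matrix.mul_inv_rev]
  have hSigdet : IsUnit Sigstar.det := isUnit_iff_ne_zero.mpr hdetS.ne'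
  have hSigInvPD : Sigstar⁻¹.PosDef := hSigstar.inv
  -- the conjugated minimizers  M n = R * Θhat n * R
  have hMPD : ∀ n, (R * Θhat n * R).PosDef := fun n => by
    have h := aux_posDef_conj (hΘhat n).1 hRdet
    rwa [hRH.eq] at h
  obtain ⟨K2, hK2def⟩ : ∃ K2 : ℝ, K2 = ∑ i, ∑ j, (Sigstar⁻¹ i j) ^ 2 := ⟨_, rfl⟩
  obtain ⟨Kinv, hKinvdef⟩ : ∃ Kinv : ℝ, Kinv = Real.sqrt K2 := ⟨_, rfl⟩
  have hKinv_nonneg : 0 ≤ Kinv := by rw [hKinvdef]; exact Real.sqrt_nonneg _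
  obtain ⟨x, hxdef⟩ : ∃ x : ℕ → ℝ,
      x = fun n => (R * Θhat n * R).trace - Real.log (R * Θhat n * R).det - p := ⟨_, rfl⟩
  obtain ⟨q, hqdef⟩ : ∃ q : ℕ → ℝ,
      q = fun n => ∑ i, ∑ j, ((S n - Sigstar) i j) ^ 2 := ⟨_, rfl⟩
  obtain ⟨c, hcdef⟩ : ∃ c : ℕ → ℝ,
      c = fun n => |((S n - Sigstar) * Sigstar⁻¹).trace| + lam n * K2 := ⟨_, rfl⟩
  obtain ⟨y, hydef⟩ : ∃ y : ℕ → ℝ,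
      y = fun n => ∑ i, ∑ j, ((R * Θhat n * R - 1) i j) ^ 2 := ⟨_, rfl⟩
  have spec : ∀ n, 0 ≤ x n ∧
      (R * Θhat n * R).trace ≤ 2 * (x n + p) ∧
      y n ≤ 2 * (1 + (R * Θhat n * R).trace) * x n ∧
      Real.sqrt (∑ i, ∑ j, (R * Θhat n * R) i j ^ 2) ≤ (R * Θhat n * R).trace := by
    intro n
    simp only [hxdef, hydef]
    exact aux_spec (hMPD n)
  -- trace and determinant relations
  have htrM : ∀ n, (R * Θhat n * R).trace = (Sigstar * Θhat n).trace := fun n => by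
    rw [Matrix.trace_mul_cycle, hRR]
  have hlogdetM : ∀ n,
      Real.log (R * Θhat n * R).det = Real.log (Θhat n).det + Real.log Sigstar.det := fun n => by
    have hdetM : (R * Θhat n * R).det = (Θhat n).det * Sigstar.det := by
      rw [Matrix.det_mul, Matrix.det_mul, ← hRR, Matrix.det_mul]; ring
    rw [hdetM, Real.log_mul (hΘhat n).1.det_pos.ne' hdetS.ne']
  -- central inequality
  have hcentral : ∀ n,
      x n ≤ c n + Real.sqrt (q n) * Kinv * (2 * x n) + Real.sqrt (q n) * Kinv * (2 * p) := by
    intro n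
    obtain ⟨hxn0, htr2, -, hMs⟩ := spec n
    have hmin := (hΘhat n).2 Sigstar⁻¹ hSigInvPD
    simp only [ridgeObj] at hmin
    obtain ⟨w, hwdef⟩ : ∃ w : ℝ, w = ∑ i, ∑ j, (Θhat n i j) ^ 2 := ⟨_, rfl⟩
    have hw_nonneg : 0 ≤ w := by rw [hwdef]; positivity
    rw [← hwdef, hK2def.symm] at hmin
    have eq1 : (S n * Θhat n).trace
        = (Sigstar * Θhat n).trace + ((S n - Sigstar) * Θhat n).trace := by
      have hsplit : S n = Sigstar + (S n - Sigstar) := by abel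
      calc (S n * Θhat n).trace = ((Sigstar + (S n - Sigstar)) * Θhat n).trace := by
            rw [← hsplit]
        _ = (Sigstar * Θhat n).trace + ((S n - Sigstar) * Θhat n).trace := by
            rw [Matrix.add_mul, Matrix.trace_add]
    have eq2 : (S n * Sigstar⁻¹).trace
        = p + ((S n - Sigstar) * Sigstar⁻¹).trace := by
      have hsplit : S n = Sigstar + (S n - Sigstar) := by abel
      calc (S n * Sigstar⁻¹).trace = ((Sigstar + (S n - Sigstar)) * Sigstar⁻¹).trace := by
            rw [← hsplit]
        _ = (Sigstar * Sigstar⁻¹).trace + ((S n - Sigstar) * Sigstar⁻¹).trace := by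
            rw [Matrix.add_mul, Matrix.trace_add]
        _ = p + ((S n - Sigstar) * Sigstar⁻¹).trace := by
            rw [Matrix.mul_nonsing_inv _ hSigdet, Matrix.trace_one]
            simp
    have eq3 : Real.log Sigstar⁻¹.det = -Real.log Sigstar.det := by
      simp [Matrix.det_nonsing_inv, Ring.inverse_eq_inv', Real.log_inv]
    have eq4 : x n = (Sigstar * Θhat n).trace - Real.log (Θhat n).det
        - Real.log Sigstar.det - p := by
      simp only [hxdef]
      rw [htrM n, hlogdetM n]; ring
    rw [eq1, eq2, eq3] at hmin
    have hxle : x n ≤ ((S n - Sigstar) * Sigstar⁻¹).trace - ((S n - Sigstar) * Θhat n).trace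
        + lam n * (K2 - w) := by
      have h := hmin
      rw [eq4]
      nlinarith [h]
    have habs1 : ((S n - Sigstar) * Sigstar⁻¹).trace
        ≤ |((S n - Sigstar) * Sigstar⁻¹).trace| := le_abs_self _
    have habs2 : -(((S n - Sigstar) * Θhat n).trace) ≤ Real.sqrt (q n) * Real.sqrt w := by
      simp only [hqdef, hwdef]
      calc -(((S n - Sigstar) * Θhat n).trace) ≤ |((S n - Sigstar) * Θhat n).trace| :=
            neg_le_abs _
        _ ≤ Real.sqrt (∑ i, ∑ j, ((S n - Sigstar) i j) ^ 2)
            * Real.sqrt (∑ i, ∑ j, (Θhat n i j) ^ 2) := aux_trace_cs _ _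
    have h1 : Sigstar⁻¹ * (R * Θhat n * R) = R⁻¹ * (Θhat n * R) := by
      rw [hSinv]
      simp only [mul_assoc]
      rw [← mul_assoc R⁻¹ R (Θhat n * R), hRinvR, one_mul]
    have hid : (Sigstar⁻¹ * (R * Θhat n * R)).trace = (Θhat n).trace := by
      rw [h1, Matrix.trace_mul_comm, mul_assoc, hRRinv, mul_one]
    have hθs : Real.sqrt w ≤ (Θhat n).trace := by
      rw [hwdef]; exact (aux_spec (hΘhat n).1).2.2.2
    have htb : (Θhat n).trace ≤ Kinv * (2 * (x n + p)) := by
      calc (Θhat n).trace = (Sigstar⁻¹ * (R * Θhat n * R)).trace := hid.symm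
        _ ≤ |(Sigstar⁻¹ * (R * Θhat n * R)).trace| := le_abs_self _
        _ ≤ Kinv * Real.sqrt (∑ i, ∑ j, (R * Θhat n * R) i j ^ 2) := by
            rw [hKinvdef, hK2def]; exact aux_trace_cs _ _
        _ ≤ Kinv * (R * Θhat n * R).trace := mul_le_mul_of_nonneg_left hMs hKinv_nonneg
        _ ≤ Kinv * (2 * (x n + p)) := mul_le_mul_of_nonneg_left htr2 hKinv_nonneg
    have hsw : Real.sqrt (q n) * Real.sqrt w ≤ Real.sqrt (q n) * (Kinv * (2 * (x n + p))) :=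
      mul_le_mul_of_nonneg_left (le_trans hθs htb) (Real.sqrt_nonneg _)
    have hlamK : lam n * (K2 - w) ≤ lam n * K2 := by nlinarith [hlam n, hw_nonneg]
    simp only [hcdef]
    have hexp : Real.sqrt (q n) * (Kinv * (2 * (x n + (p : ℝ))))
        = Real.sqrt (q n) * Kinv * (2 * x n) + Real.sqrt (q n) * Kinv * (2 * (p : ℝ)) := by
      ring
    linarith [hxle, habs1, habs2, hsw, hlamK, hexp]
  -- convergence of the error terms
  have hE : ∀ i j, Tendsto (fun n => S n i j - Sigstar i j) atTop (nhds 0) := fun i j => by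
    have h := (hSconv i j).sub_const (Sigstar i j)
    simpa using h
  have hq0 : Tendsto q atTop (nhds 0) := by
    have hterm : ∀ i j, Tendsto (fun n => ((S n - Sigstar) i j) ^ 2) atTop (nhds 0) := by
      intro i j
      have h := (hE i j).pow 2
      simp only [ne_eq, OfNat.ofNat_ne_zero, not_false_eq_true, zero_pow] at h
      simpa [Matrix.sub_apply] using h
    have h := tendsto_finset_sum (Finset.univ : Finset (Fin p))
      (fun i _ => tendsto_finset_sum (Finset.univ : Finset (Fin p)) (fun j _ => hterm i j))
    simpa [hqdef] using h
  have hsq0 : Tendsto (fun n => Real.sqrt (q n)) atTop (nhds 0) := by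
    have h := (Real.continuous_sqrt.tendsto 0).comp hq0
    simpa [Function.comp_def, Real.sqrt_zero] using h
  have htr0 : Tendsto (fun n => ((S n - Sigstar) * Sigstar⁻¹).trace) atTop (nhds 0) := by
    have hterm : ∀ i j, Tendsto (fun n => ((S n - Sigstar) i j) * Sigstar⁻¹ j i)
        atTop (nhds 0) := by
      intro i j
      have h := (hE i j).mul_const (Sigstar⁻¹ j i)
      simpa [Matrix.sub_apply] using h
    have h := tendsto_finset_sum (Finset.univ : Finset (Fin p))
      (fun i _ => tendsto_finset_sum (Finset.univ : Finset (Fin p)) (fun j _ => hterm i j))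
    have hrw : (fun n => ((S n - Sigstar) * Sigstar⁻¹).trace)
        = fun n => ∑ i, ∑ j, ((S n - Sigstar) i j) * Sigstar⁻¹ j i := by
      funext n; rw [aux_trace_mul]
    rw [hrw]
    simpa using h
  have hc0 : Tendsto c atTop (nhds 0) := by
    have h1 : Tendsto (fun n => |((S n - Sigstar) * Sigstar⁻¹).trace|) atTop (nhds 0) := by
      simpa using htr0.abs
    have h2 : Tendsto (fun n => lam n * K2) atTop (nhds 0) := by
      simpa using hlamconv.mul_const K2
    simpa [hcdef] using h1.add h2
  have hm : Tendsto (fun n => Real.sqrt (q n) * Kinv) atTop (nhds 0) := by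
    simpa using hsq0.mul_const Kinv
  have hev : ∀ᶠ n in atTop, Real.sqrt (q n) * Kinv ≤ 1 / 4 :=
    (hm.eventually (gt_mem_nhds (by norm_num : (0 : ℝ) < 1 / 4))).mono fun n h => h.le
  have hxev : ∀ᶠ n in atTop, x n ≤ 2 * c n + 4 * (Real.sqrt (q n) * Kinv) * p := by
    filter_upwards [hev] with n hn
    have h1 := hcentral n
    have hxn0 := (spec n).1
    have hp0 : (0 : ℝ) ≤ p := Nat.cast_nonneg p
    have h2 := mul_le_mul_of_nonneg_right hn hxn0
    have h3 := mul_le_mul_of_nonneg_right hn hp0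
    linarith [h1, h2, h3]
  have hu0 : Tendsto (fun n => 2 * c n + 4 * (Real.sqrt (q n) * Kinv) * p)
      atTop (nhds 0) := by
    have h1 := hc0.const_mul (2 : ℝ)
    have h2 := (hm.const_mul (4 : ℝ)).mul_const (p : ℝ)
    simpa using h1.add h2
  have hx0' : Tendsto x atTop (nhds 0) :=
    squeeze_zero' (Filter.Eventually.of_forall fun n => (spec n).1) hxev hu0
  have hyle : ∀ n, y n ≤ 2 * ((1 + 2 * (x n + p)) * x n) := by
    intro n
    obtain ⟨hxn0, htr2, hy2, -⟩ := spec n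
    linarith [hy2, mul_le_mul_of_nonneg_right htr2 hxn0]
  have hrhs0 : Tendsto (fun n => 2 * ((1 + 2 * (x n + p)) * x n)) atTop (nhds 0) := by
    have t1 := ((hx0'.add_const (p : ℝ)).const_mul (2 : ℝ)).const_add (1 : ℝ)
    have t2 := (t1.mul hx0').const_mul (2 : ℝ)
    simpa only [zero_add, mul_zero, add_zero] using t2
  have hy_nonneg : ∀ n, 0 ≤ y n := by
    intro n
    simp only [hydef]
    exact Finset.sum_nonneg fun i _ => Finset.sum_nonneg fun j _ => sq_nonneg _
  have hy0 : Tendsto y atTop (nhds 0) :=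
    squeeze_zero' (Filter.Eventually.of_forall hy_nonneg)
      (Filter.Eventually.of_forall hyle) hrhs0
  have hsy0 : Tendsto (fun n => Real.sqrt (y n)) atTop (nhds 0) := by
    have h := (Real.continuous_sqrt.tendsto 0).comp hy0
    simpa [Function.comp_def, Real.sqrt_zero] using h
  have hentry : ∀ i j, Tendsto (fun n => (R * Θhat n * R) i j) atTop
      (nhds ((1 : Matrix (Fin p) (Fin p) ℝ) i j)) := by
    intro i j
    have hb : ∀ n, ‖(R * Θhat n * R - 1) i j‖ ≤ Real.sqrt (y n) := by
      intro n
      have h1 : ((R * Θhat n * R - 1) i j) ^ 2 ≤ y n := by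
        simp only [hydef]
        calc ((R * Θhat n * R - 1) i j) ^ 2
            ≤ ∑ j', ((R * Θhat n * R - 1) i j') ^ 2 :=
              Finset.single_le_sum (f := fun j' => ((R * Θhat n * R - 1) i j') ^ 2)
                (fun j' _ => sq_nonneg _) (Finset.mem_univ j)
          _ ≤ ∑ i', ∑ j', ((R * Θhat n * R - 1) i' j') ^ 2 :=
              Finset.single_le_sum
                (f := fun i' => ∑ j', ((R * Θhat n * R - 1) i' j') ^ 2)
                (fun i' _ => Finset.sum_nonneg fun j' _ => sq_nonneg _) (Finset.mem_univ i)
      rw [Real.norm_eq_abs, ← Real.sqrt_sq_eq_abs]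
      exact Real.sqrt_le_sqrt h1
    have h0 := squeeze_zero_norm hb hsy0
    have h2 := h0.add_const ((1 : Matrix (Fin p) (Fin p) ℝ) i j)
    have h3 : (fun n => (R * Θhat n * R - 1) i j + (1 : Matrix (Fin p) (Fin p) ℝ) i j)
        = fun n => (R * Θhat n * R) i j := by
      funext n; simp [Matrix.sub_apply]
    rw [h3] at h2
    simpa using h2
  have hMtend : Tendsto (fun n => R * Θhat n * R) atTop
      (nhds (1 : Matrix (Fin p) (Fin p) ℝ)) :=
    tendsto_pi_nhds.mpr fun i => tendsto_pi_nhds.mpr fun j => hentry i j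
  have hcont : Continuous (fun X : Matrix (Fin p) (Fin p) ℝ => R⁻¹ * X * R⁻¹) :=
    (continuous_const.matrix_mul continuous_id).matrix_mul continuous_const
  have hΘtend : Tendsto Θhat atTop (nhds Sigstar⁻¹) := by
    have h1 := (hcont.tendsto (1 : Matrix (Fin p) (Fin p) ℝ)).comp hMtend
    have h4 : Tendsto (fun n => R⁻¹ * (R * Θhat n * R) * R⁻¹) atTop
        (nhds (R⁻¹ * 1 * R⁻¹)) := by
      simpa [Function.comp_def] using h1
    have h2 : (fun n => R⁻¹ * (R * Θhat n * R) * R⁻¹) = Θhat := by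
      funext n
      simp only [mul_assoc]
      rw [hRRinv, mul_one, ← mul_assoc R⁻¹ R, hRinvR, one_mul]
    have h3 : R⁻¹ * (1 : Matrix (Fin p) (Fin p) ℝ) * R⁻¹ = Sigstar⁻¹ := by
      rw [mul_one, ← hSinv]
    rw [h2, h3] at h4
    exact h4
  have hde : ∀ i j, Tendsto (fun n => (Θhat n - Sigstar⁻¹) i j) atTop (nhds 0) := by
    intro i j
    have h := tendsto_pi_nhds.mp (tendsto_pi_nhds.mp hΘtend i) j
    have h2 := h.sub_const (Sigstar⁻¹ i j)
    simpa [Matrix.sub_apply] using h2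
  have hsum : Tendsto (fun n => ∑ i, ∑ j, ((Θhat n - Sigstar⁻¹) i j) ^ 2) atTop (nhds 0) := by
    have hterm : ∀ i j, Tendsto (fun n => ((Θhat n - Sigstar⁻¹) i j) ^ 2) atTop (nhds 0) := by
      intro i j
      have h := (hde i j).pow 2
      simpa using h
    have h := tendsto_finset_sum (Finset.univ : Finset (Fin p))
      (fun i _ => tendsto_finset_sum (Finset.univ : Finset (Fin p)) (fun j _ => hterm i j))
    simpa using h
  simp only [frobNorm]
  have h := (Real.continuous_sqrt.tendsto 0).comp hsum
  simpa [Function.comp_def, Real.sqrt_zero] using h
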